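/- Let ρ, σ be quantum states on ℂ^d and set ε = (1/2)‖ρ − σ‖₁. Then there exist quantum states ω, Δ₊, Δ₋ on ℂ^d such that ω = (1/(1+ε)) ρ + (ε/(1+ε)) Δ₋ and ω = (1/(1+ε)) σ + (ε/(1+ε)) Δ₊. -/

import Mathlib

open scoped BigOperators ComplexOrder Classical

noncomputable section

/-- Shannon entropy of a finitely supported distribution, with `0 log 0 = 0`. -/
def shannonEntropy {ι : Type*} [Fintype ι] (p : ι → ℝ) : ℝ :=
  -∑ i, p i * Real.log (p i)

/-- A quantum state: positive semidefinite with unit trace. -/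
def IsState {n : Type*} [Fintype n] (ρ : Matrix n n ℂ) : Prop :=
  ρ.PosSemidef ∧ ρ.trace = 1

/-- A POVM: positive semidefinite elements summing to the identity. -/
def IsPOVM {ι n : Type*} [Fintype ι] [Fintype n] [DecidableEq n]
    (M : ι → Matrix n n ℂ) : Prop :=
  (∀ i, (M i).PosSemidef) ∧ ∑ i, M i = 1

/-- Observational entropy `S_M(ρ) = -∑ p_i log (p_i / V_i)`. -/
def obsEntropy {ι n : Type*} [Fintype ι] [Fintype n]
    (M : ι → Matrix n n ℂ) (ρ : Matrix n n ℂ) : ℝ :=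
  -∑ i, ((M i * ρ).trace.re * Real.log ((M i * ρ).trace.re / (M i).trace.re))

/-- The function `g(x) = -x log x + (1+x) log(1+x)`. -/
def gFun (x : ℝ) : ℝ := -(x * Real.log x) + (1 + x) * Real.log (1 + x)

/-- Trace norm of a square complex matrix. -/
def traceNorm {n : Type*} [Fintype n] [DecidableEq n] (X : Matrix n n ℂ) : ℝ :=
  ((Matrix.isHermitian_conjTranspose_mul_self X).eigenvectorUnitary.1 *
    Matrix.diagonal (fun i => (Real.sqrt ((Matrix.isHermitian_conjTranspose_mul_self X).eigenvalues i) : ℂ)) *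
    (star (Matrix.isHermitian_conjTranspose_mul_self X).eigenvectorUnitary : Matrix n n ℂ)).trace.re

/-- Matrix logarithm of a Hermitian matrix via the spectral decomposition,
with the convention `log 0 = 0` on the kernel; junk value `0` on non-Hermitian input. -/
def matLog {n : Type*} [Fintype n] [DecidableEq n] (A : Matrix n n ℂ) : Matrix n n ℂ :=
  if hA : A.IsHermitian then
    (hA.eigenvectorUnitary : Matrix n n ℂ) *
      Matrix.diagonal (fun i => (Real.log (hA.eigenvalues i) : ℂ)) *
      (star (hA.eigenvectorUnitary : Matrix n n ℂ))
  else 0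

/-- Von Neumann entropy `S(ρ) = -tr(ρ log ρ)`. -/
def vnEntropy {n : Type*} [Fintype n] [DecidableEq n] (ρ : Matrix n n ℂ) : ℝ :=
  -((ρ * matLog ρ).trace.re)

/-- Quantum relative entropy, as an extended real number: `tr(μ (log μ - log ν))` when
`supp μ ⊆ supp ν` (both Hermitian), and `+∞` otherwise. -/
def qRelEntropy {n : Type*} [Fintype n] [DecidableEq n] (μ ν : Matrix n n ℂ) : EReal :=
  if μ.IsHermitian ∧ ν.IsHermitian ∧
      LinearMap.range (Matrix.toLin' μ) ≤ LinearMap.range (Matrix.toLin' ν) then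
    (((μ * (matLog μ - matLog ν)).trace.re : ℝ) : EReal)
  else ⊤

/-- Real-valued quantum relative entropy `tr(μ (log μ - log ν))` (meaningful when
`supp μ ⊆ supp ν`). -/
def qRelEntropyR {n : Type*} [Fintype n] [DecidableEq n] (μ ν : Matrix n n ℂ) : ℝ :=
  (μ * (matLog μ - matLog ν)).trace.re


open Matrix in
lemma myPSD_real_smul {d : ℕ} {A : Matrix (Fin d) (Fin d) ℂ} (hA : A.PosSemidef) {c : ℝ}
    (hc : 0 ≤ c) : (c • A).PosSemidef := by
  have h : c • A = (c : ℂ) • A := by ext i j; simp [Complex.real_smul]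
  rw [h]
  constructor
  · unfold Matrix.IsHermitian
    rw [conjTranspose_smul, hA.1.eq, Complex.star_def, Complex.conj_ofReal]
  · intro x
    exact (hA.smul (show (0:ℂ) ≤ c by exact_mod_cast hc)).2 x

open scoped MatrixOrder in
lemma myTraceNormMat_eq {d : ℕ} (A C : Matrix (Fin d) (Fin d) ℂ) (hC : C.PosSemidef)
    (h : C * C = A.conjTranspose * A) :
    ((Matrix.isHermitian_conjTranspose_mul_self A).eigenvectorUnitary.1 *
    Matrix.diagonal (fun i => (Real.sqrt ((Matrix.isHermitian_conjTranspose_mul_self A).eigenvalues i) : ℂ)) *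
    (star (Matrix.isHermitian_conjTranspose_mul_self A).eigenvectorUnitary : Matrix (Fin d) (Fin d) ℂ)) = C := by
  have hB := Matrix.isHermitian_conjTranspose_mul_self A
  have hB0 : (0 : Matrix (Fin d) (Fin d) ℂ) ≤ A.conjTranspose * A :=
    Matrix.nonneg_iff_posSemidef.mpr (Matrix.posSemidef_conjTranspose_mul_self A)
  have e1 : ((Matrix.isHermitian_conjTranspose_mul_self A).eigenvectorUnitary.1 *
    Matrix.diagonal (fun i => (Real.sqrt ((Matrix.isHermitian_conjTranspose_mul_self A).eigenvalues i) : ℂ)) *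
    (star (Matrix.isHermitian_conjTranspose_mul_self A).eigenvectorUnitary : Matrix (Fin d) (Fin d) ℂ)) = CFC.sqrt (A.conjTranspose * A) := by
    rw [CFC.sqrt_eq_real_sqrt _ hB0, cfcₙ_eq_cfc, hB.cfc_eq, Matrix.IsHermitian.cfc, Unitary.conjStarAlgAut_apply]
    rfl
  rw [e1]
  exact CFC.sqrt_unique h (Matrix.nonneg_iff_posSemidef.mpr hC)

theorem omega_delta_decomposition {d : ℕ} (ρ σ : Matrix (Fin d) (Fin d) ℂ)
    (hρ : IsState ρ) (hσ : IsState σ) (ε : ℝ) (hε : ε = (1/2) * traceNorm (ρ - σ)) :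
    ∃ ω Δp Δm : Matrix (Fin d) (Fin d) ℂ,
      IsState ω ∧ IsState Δp ∧ IsState Δm ∧
      ω = (1/(1+ε)) • ρ + (ε/(1+ε)) • Δm ∧
      ω = (1/(1+ε)) • σ + (ε/(1+ε)) • Δp := by
  classical
  open Matrix in
  have hH : (ρ - σ).IsHermitian := hρ.1.1.sub hσ.1.1
  set U : Matrix (Fin d) (Fin d) ℂ := (hH.eigenvectorUnitary : Matrix (Fin d) (Fin d) ℂ) with hUdef
  set lam : Fin d → ℝ := hH.eigenvalues with hlamdef
  have hUU : star U * U = 1 := Matrix.mem_unitaryGroup_iff'.mp hH.eigenvectorUnitary.2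
  have hcancel : ∀ X : Matrix (Fin d) (Fin d) ℂ, star U * (U * X) = X := fun X => by
    rw [← Matrix.mul_assoc, hUU, Matrix.one_mul]
  set cnj : (Fin d → ℝ) → Matrix (Fin d) (Fin d) ℂ :=
    fun f => U * Matrix.diagonal (fun i => (f i : ℂ)) * star U with hcnj
  have htr : ∀ f : Fin d → ℝ, (cnj f).trace = ((∑ i, f i : ℝ) : ℂ) := by
    intro f
    rw [hcnj]
    simp only []
    rw [Matrix.trace_mul_cycle, hUU, one_mul, Matrix.trace_diagonal]
    push_cast
    rfl
  have hpsd : ∀ f : Fin d → ℝ, (∀ i, 0 ≤ f i) → (cnj f).PosSemidef := by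
    intro f hf
    rw [hcnj]
    simp only [Matrix.star_eq_conjTranspose]
    refine (Matrix.PosSemidef.diagonal ?_).mul_mul_conjTranspose_same U
    intro i
    simp only [Pi.zero_apply]
    exact_mod_cast hf i
  have hmul : ∀ f g : Fin d → ℝ, cnj f * cnj g = cnj (fun i => f i * g i) := by
    intro f g
    rw [hcnj]
    simp only [Matrix.mul_assoc]
    rw [hcancel, ← Matrix.mul_assoc (Matrix.diagonal _), Matrix.diagonal_mul_diagonal]
    congr 2
    ext i
    push_cast
    rfl
  have hsub : ∀ f g : Fin d → ℝ, cnj f - cnj g = cnj (fun i => f i - g i) := by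
    intro f g
    rw [hcnj]
    simp only []
    rw [← Matrix.sub_mul, ← Matrix.mul_sub, Matrix.diagonal_sub]
    congr 2
    ext i
    push_cast
    rfl
  have hspec : ρ - σ = cnj lam := by
    rw [hcnj]
    exact hH.spectral_theorem
  have habs : cnj (fun i => |lam i|) =
      ((Matrix.isHermitian_conjTranspose_mul_self (ρ - σ)).eigenvectorUnitary.1 *
    Matrix.diagonal (fun i => (Real.sqrt ((Matrix.isHermitian_conjTranspose_mul_self (ρ - σ)).eigenvalues i) : ℂ)) *
    (star (Matrix.isHermitian_conjTranspose_mul_self (ρ - σ)).eigenvectorUnitary : Matrix (Fin d) (Fin d) ℂ)) := by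
    refine (myTraceNormMat_eq _ _ (hpsd _ (fun i => abs_nonneg _)) ?_).symm
    rw [hmul, hH.eq, hspec, hmul,
      show (fun i => |lam i| * |lam i|) = fun i => lam i * lam i from
        funext fun i => abs_mul_abs_self _]
  have hεabs : 2 * ε = ∑ i, |lam i| := by
    rw [hε, traceNorm, ← habs, htr]
    push_cast
    ring_nf
    simp [Complex.ofReal_re]
  have hsum0 : ∑ i, lam i = 0 := by
    have h1 : (ρ - σ).trace = 0 := by
      rw [Matrix.trace_sub, hρ.2, hσ.2, sub_self]
    rw [hspec, htr] at h1
    exact_mod_cast h1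
  have hε0 : 0 ≤ ε := by
    have h2 : 0 ≤ ∑ i, |lam i| := Finset.sum_nonneg fun i _ => abs_nonneg _
    linarith [hεabs ▸ h2]
  by_cases h0 : ε = 0
  · -- then ρ = σ
    have hlam0 : ∀ i, lam i = 0 := by
      intro i
      have h := (Finset.sum_eq_zero_iff_of_nonneg
        (fun i _ => abs_nonneg (lam i))).mp (by rw [← hεabs, h0]; ring) i (Finset.mem_univ i)
      exact abs_eq_zero.mp h
    have hρσ : ρ = σ := by
      have h1 : ρ - σ = 0 := by
        rw [hspec, hcnj]
        simp only []
        rw [show (fun i => ((lam i : ℝ) : ℂ)) = fun _ => (0 : ℂ) from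
          funext fun i => by rw [hlam0]; norm_num]
        simp
      exact sub_eq_zero.mp h1
    refine ⟨ρ, ρ, ρ, ⟨hρ.1, hρ.2⟩, ⟨hρ.1, hρ.2⟩, ⟨hρ.1, hρ.2⟩, ?_, ?_⟩
    · rw [h0]; norm_num
    · rw [h0, ← hρσ]; norm_num
  · have hεpos : 0 < ε := lt_of_le_of_ne hε0 (Ne.symm h0)
    have hne : (1 : ℝ) + ε ≠ 0 := by positivity
    set pos : Fin d → ℝ := fun i => max (lam i) 0 with hposdef
    set neg : Fin d → ℝ := fun i => max (-lam i) 0 with hnegdef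
    have hposneg : ∀ i, pos i - neg i = lam i := fun i => max_zero_sub_max_neg_zero_eq_self _
    have habs' : ∀ i, pos i + neg i = |lam i| := fun i => max_zero_add_max_neg_zero_eq_abs_self _
    have h1 : ∑ i, pos i - ∑ i, neg i = 0 := by
      rw [← Finset.sum_sub_distrib]
      simp_rw [hposneg]
      exact hsum0
    have h2 : ∑ i, pos i + ∑ i, neg i = 2 * ε := by
      rw [← Finset.sum_add_distrib]
      simp_rw [habs']
      exact hεabs.symm
    have hsump : ∑ i, pos i = ε := by linarith
    have hsumn : ∑ i, neg i = ε := by linarith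
    have Ppsd : (cnj pos).PosSemidef := hpsd _ fun i => le_max_right _ _
    have Npsd : (cnj neg).PosSemidef := hpsd _ fun i => le_max_right _ _
    have hPN : cnj pos - cnj neg = ρ - σ := by
      rw [hsub]
      simp_rw [hposneg]
      exact hspec.symm
    have hkey : ρ + cnj neg = σ + cnj pos := by
      have h := sub_eq_sub_iff_add_eq_add.mp hPN
      exact h.symm.trans (add_comm _ _)
    have hc : ε / (1 + ε) * ε⁻¹ = 1 / (1 + ε) := by field_simp
    refine ⟨(1/(1+ε)) • (ρ + cnj neg), ε⁻¹ • cnj pos, ε⁻¹ • cnj neg, ?_, ?_, ?_, ?_, ?_⟩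
    · constructor
      · exact myPSD_real_smul (hρ.1.add Npsd) (by positivity)
      · have htrω : (ρ + cnj neg).trace = ((1 + ε : ℝ) : ℂ) := by
          rw [Matrix.trace_add, hρ.2, htr, hsumn]
          push_cast
          ring
        rw [Matrix.trace_smul, htrω, Complex.real_smul, ← Complex.ofReal_mul]
        norm_cast
        field_simp
    · constructor
      · exact myPSD_real_smul Ppsd (by positivity)
      · rw [Matrix.trace_smul, htr, hsump, Complex.real_smul, ← Complex.ofReal_mul]
        norm_cast
        field_simp
    · constructor
      · exact myPSD_real_smul Npsd (by positivity)
      · rw [Matrix.trace_smul, htr, hsumn, Complex.real_smul, ← Complex.ofReal_mul]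
        norm_cast
        field_simp
    · rw [smul_smul, hc, ← smul_add]
    · rw [smul_smul, hc, ← smul_add, hkey]
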